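/- Let f be a continuous quasiperiodically forced map over an irrational rotation, and 𝒜 a compact invariant set without isolated points such that f|_𝒜 is transitive and 𝒜 supports a finite f-invariant measure with full support in 𝒜. If 𝒜 is pinched, then either f restricted to 𝒜 has sensitive dependence on initial conditions, or 𝒜 is the graph of a continuous function ψ : 𝕋¹ → M. -/

import Mathlib

open MeasureTheory Filter Set
open scoped ENNReal NNReal

private lemma multi_cont {X : Type*} [MetricSpace X] {f : X → X} (hf : Continuous f)
    (c : X) (m : ℕ) {r : ℝ} (hr : 0 < r) :
    ∃ ρ > 0, ∀ u, dist u c < ρ → ∀ i ≤ m, dist (f^[i] u) (f^[i] c) < r := by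
  induction m with
  | zero =>
    exact ⟨r, hr, fun u hu i hi => by
      simp only [Nat.le_zero.mp hi, Function.iterate_zero, id]; exact hu⟩
  | succ m ih =>
    obtain ⟨ρ₁, hρ₁, h1⟩ := ih
    have h2 := (hf.iterate (m+1)).continuousAt (x := c)
    rw [Metric.continuousAt_iff] at h2
    obtain ⟨ρ₂, hρ₂, h2⟩ := h2 r hr
    refine ⟨min ρ₁ ρ₂, lt_min hρ₁ hρ₂, fun u hu i hi => ?_⟩
    rcases Nat.lt_or_ge i (m+1) with h | h
    · exact h1 u (lt_of_lt_of_le hu (min_le_left _ _)) i (Nat.lt_succ_iff.mp h)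
    · have : i = m + 1 := le_antisymm hi h
      subst this
      exact h2 (lt_of_lt_of_le hu (min_le_right _ _))


private lemma nsmul_ne_zero_circ {s : ℝ} (hs : Irrational s) {n : ℕ} (hn : n ≠ 0) :
    (n • (s : AddCircle (1:ℝ))) ≠ 0 := by
  intro h
  rw [← AddCircle.coe_nsmul, AddCircle.coe_eq_zero_iff] at h
  obtain ⟨m, hm⟩ := h
  have hm' : (m : ℝ) = n * s := by
    simpa [zsmul_eq_mul, nsmul_eq_mul] using hm
  have hn' : (n : ℝ) ≠ 0 := Nat.cast_ne_zero.mpr hn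
  exact hs ⟨(m : ℚ) / (n : ℚ), by push_cast; field_simp; linarith⟩

private lemma circle_small (s : ℝ) {δ : ℝ} (hδ : 0 < δ) :
    ∃ n : ℕ, n ≠ 0 ∧ ‖(n • (s : AddCircle (1:ℝ)))‖ < δ := by
  haveI : Fact ((0:ℝ) < 1) := ⟨one_pos⟩
  set u : ℕ → AddCircle (1:ℝ) := fun n => n • (s : AddCircle (1:ℝ)) with hu
  obtain ⟨x, -, φ, hφ, hconv⟩ := isCompact_univ.tendsto_subseq (fun n => Set.mem_univ (u n))
  have hC : CauchySeq (u ∘ φ) := hconv.cauchySeq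
  rw [Metric.cauchySeq_iff] at hC
  obtain ⟨N, hN⟩ := hC δ hδ
  have hlt : φ N < φ (N + 1) := hφ (Nat.lt_succ_self N)
  refine ⟨φ (N + 1) - φ N, Nat.sub_ne_zero_of_lt hlt, ?_⟩
  have h1 : (φ (N+1) - φ N) • (s : AddCircle (1:ℝ)) = u (φ (N+1)) - u (φ N) :=
    sub_nsmul (s : AddCircle (1:ℝ)) hlt.le
  rw [h1, ← dist_eq_norm]
  exact hN (N+1) (Nat.le_succ N) N le_rfl

private lemma coe_int_zero_circ (m : ℤ) : ((m : ℝ) : AddCircle (1:ℝ)) = 0 := by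
  rw [AddCircle.coe_eq_zero_iff]
  exact ⟨m, by simp⟩

private lemma norm_circ_le {t : ℝ} (h0 : 0 ≤ t) (h1 : t < 1/2) :
    ‖((t : ℝ) : AddCircle (1:ℝ))‖ = t := by
  have hr : round ((1:ℝ)⁻¹ * t) = 0 := by
    rw [round_eq_zero_iff]
    constructor
    · simp; linarith
    · simp; linarith
  rw [AddCircle.norm_eq, hr]
  simp [abs_of_nonneg h0]

private lemma circle_dense {s : ℝ} (hs : Irrational s) (θ x : AddCircle (1:ℝ)) {δ : ℝ}
    (hδ : 0 < δ) : ∃ n : ℕ, dist (θ + n • (s : AddCircle (1:ℝ))) x < δ := by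
  classical
  set δ' : ℝ := min δ 2⁻¹ with hδ'def
  have hδ'0 : 0 < δ' := lt_min hδ (by norm_num)
  have hδ'δ : δ' ≤ δ := min_le_left _ _
  have hδ'2 : δ' ≤ 2⁻¹ := min_le_right _ _
  obtain ⟨n₀, hn₀, hg⟩ := circle_small s hδ'0
  set g : AddCircle (1:ℝ) := n₀ • (s : AddCircle (1:ℝ)) with hgdef
  set c : ℝ := n₀ * s with hcdef
  set r : ℝ := c - round c with hrdef
  have hcg : ((c : ℝ) : AddCircle (1:ℝ)) = g := by
    rw [hgdef, ← AddCircle.coe_nsmul, nsmul_eq_mul]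
  have hrg : ((r : ℝ) : AddCircle (1:ℝ)) = g := by
    rw [hrdef, AddCircle.coe_sub, coe_int_zero_circ, sub_zero, hcg]
  have hnorm : ‖g‖ = |r| := by
    rw [← hcg, AddCircle.norm_eq]; simp [hrdef]
  have hr_lt : |r| < δ' := by rw [← hnorm]; exact hg
  have hrne : r ≠ 0 := by
    intro h0
    apply nsmul_ne_zero_circ hs hn₀
    rw [hgdef] at hrg
    rw [← hrg, h0]
    norm_cast
  obtain ⟨z, hz⟩ := QuotientAddGroup.mk_surjective (x - θ)
  set y' : ℝ := Int.fract z with hy'def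
  have hy'0 : 0 ≤ y' := Int.fract_nonneg z
  have hy'1 : y' < 1 := Int.fract_lt_one z
  have hy'c : ((y' : ℝ) : AddCircle (1:ℝ)) = x - θ := by
    rw [hy'def, Int.fract, AddCircle.coe_sub, coe_int_zero_circ, sub_zero]
    exact hz
  have key : ∃ k : ℕ, dist (k • g) (x - θ) < δ' := by
    rcases hrne.lt_or_gt with hneg | hpos
    · -- r < 0
      set y'' : ℝ := y' - 1 with hy''def
      have hy''0 : y'' < 0 := by rw [hy''def]; linarith
      have hy''c : ((y'' : ℝ) : AddCircle (1:ℝ)) = x - θ := by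
        rw [hy''def, AddCircle.coe_sub, show ((1:ℝ) : AddCircle (1:ℝ)) = 0 by
          simpa using coe_int_zero_circ 1, sub_zero, hy'c]
      have hex : ∃ k : ℕ, (k : ℝ) * r ≤ y'' := by
        obtain ⟨k, hk⟩ := exists_nat_ge (y'' / r)
        exact ⟨k, (div_le_iff_of_neg hneg).mp hk⟩
      set k₀ := Nat.find hex with hk₀def
      have h1 : (k₀ : ℝ) * r ≤ y'' := Nat.find_spec hex
      have hk₀0 : k₀ ≠ 0 := by
        intro h0
        rw [h0] at h1
        push_cast at h1
        linarith
      obtain ⟨k, hk⟩ := Nat.exists_eq_succ_of_ne_zero hk₀0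
      have hmin : ¬((k : ℝ) * r ≤ y'') := Nat.find_min hex (by omega)
      push_neg at hmin
      set t : ℝ := y'' - k₀ * r with htdef
      have ht0 : 0 ≤ t := by rw [htdef]; linarith
      have ht1 : t < -r := by
        rw [htdef, hk]
        push_cast
        linarith
      have htδ : t < δ' := lt_of_lt_of_le (lt_of_lt_of_le ht1 (neg_le_abs r)) hr_lt.le
      refine ⟨k₀, ?_⟩
      rw [dist_eq_norm]
      have : k₀ • g - (x - θ) = ((-t : ℝ) : AddCircle (1:ℝ)) := by
        rw [← hrg, ← AddCircle.coe_nsmul, nsmul_eq_mul, ← hy''c, ← AddCircle.coe_sub]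
        congr 1
        rw [htdef]; ring
      rw [this, AddCircle.coe_neg, norm_neg,
        norm_circ_le ht0 (by linarith [lt_of_lt_of_le htδ hδ'2])]
      exact htδ
    · -- r > 0
      have hex : ∃ k : ℕ, y' ≤ (k : ℝ) * r := by
        obtain ⟨k, hk⟩ := exists_nat_ge (y' / r)
        exact ⟨k, (div_le_iff₀ hpos).mp hk⟩
      set k₀ := Nat.find hex with hk₀def
      have h1 : y' ≤ (k₀ : ℝ) * r := Nat.find_spec hex
      set t : ℝ := (k₀ : ℝ) * r - y' with htdef
      have ht0 : 0 ≤ t := by rw [htdef]; linarith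
      have ht1 : t < r := by
        rcases Nat.eq_zero_or_pos k₀ with h0 | h0
        · have : ((k₀:ℕ) : ℝ) = 0 := by rw [h0]; norm_num
          rw [htdef, this]
          linarith
        · obtain ⟨k, hk⟩ := Nat.exists_eq_succ_of_ne_zero h0.ne'
          have hmin : ¬(y' ≤ (k : ℝ) * r) := Nat.find_min hex (by omega)
          push_neg at hmin
          rw [htdef, hk]
          push_cast
          linarith
      have htδ : t < δ' := lt_of_lt_of_le (lt_of_lt_of_le ht1 (le_abs_self r)) hr_lt.le
      refine ⟨k₀, ?_⟩
      rw [dist_eq_norm]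
      have : k₀ • g - (x - θ) = ((t : ℝ) : AddCircle (1:ℝ)) := by
        rw [← hrg, ← AddCircle.coe_nsmul, nsmul_eq_mul, ← hy'c, ← AddCircle.coe_sub]
      rw [this, norm_circ_le ht0 (by linarith [lt_of_lt_of_le htδ hδ'2])]
      exact htδ
  obtain ⟨k, hk⟩ := key
  refine ⟨k * n₀, ?_⟩
  have hsm : (k * n₀) • (s : AddCircle (1:ℝ)) = k • g := by
    rw [hgdef, mul_comm, mul_nsmul]
  rw [hsm, dist_eq_norm]
  calc ‖θ + k • g - x‖ = ‖k • g - (x - θ)‖ := by congr 1; abel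
  _ < δ' := by rw [← dist_eq_norm]; exact hk
  _ ≤ δ := hδ'δ


/-- For a pinched compact invariant set `𝒜` of a quasiperiodically
forced map over an irrational rotation (no isolated points, transitive, supporting a
fully-supported finite invariant measure): either `f|𝒜` has sensitive dependence on
initial conditions or `𝒜` is the graph of a continuous function. -/
theorem pinched_dichotomy {M : Type*} [MetricSpace M] [MeasurableSpace M] [BorelSpace M]
    (ω : ℝ) (hω : Irrational ω)
    (F : AddCircle (1 : ℝ) → M → M)
    (f : AddCircle (1 : ℝ) × M → AddCircle (1 : ℝ) × M)
    (hf : ∀ p, f p = (p.1 + (ω : AddCircle (1 : ℝ)), F p.1 p.2))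
    (hcont : Continuous f)
    (A : Set (AddCircle (1 : ℝ) × M)) (hA : IsCompact A) (hinv : f '' A = A)
    (hiso : ∀ x ∈ A, x ∈ closure (A \ {x}))
    (htrans : ∃ x ∈ A, A ⊆ closure (Set.range fun n : ℕ => f^[n] x))
    (μ : Measure (AddCircle (1 : ℝ) × M)) [IsFiniteMeasure μ]
    (hμinv : ∀ s, MeasurableSet s → μ (f ⁻¹' s) = μ s)
    (hμA : μ Aᶜ = 0)
    (hμfull : ∀ U : Set (AddCircle (1 : ℝ) × M), IsOpen U → (U ∩ A).Nonempty → 0 < μ U)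
    (hpinch : ∃ θ : AddCircle (1 : ℝ), ∃ ξ : M, {ξ' : M | (θ, ξ') ∈ A} = {ξ}) :
    (∃ ε > 0, ∀ x ∈ A, ∀ δ > 0, ∃ y ∈ A, ∃ z ∈ A,
        dist x y ≤ δ ∧ dist x z ≤ δ ∧ ∃ n : ℕ, ε ≤ dist (f^[n] y) (f^[n] z)) ∨
    (∃ ψ : AddCircle (1 : ℝ) → M, Continuous ψ ∧
        A = {p : AddCircle (1 : ℝ) × M | p.2 = ψ p.1}) := by
  classical
  by_cases hsens : (∃ ε > 0, ∀ x ∈ A, ∀ δ > 0, ∃ y ∈ A, ∃ z ∈ A,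
      dist x y ≤ δ ∧ dist x z ≤ δ ∧ ∃ n : ℕ, ε ≤ dist (f^[n] y) (f^[n] z))
  · exact Or.inl hsens
  right
  push_neg at hsens
  obtain ⟨x₀, hx₀A, hx₀d⟩ := htrans
  obtain ⟨θ₀, ξ₀, hfib⟩ := hpinch
  set p₀ : AddCircle (1:ℝ) × M := (θ₀, ξ₀) with hp₀def
  have hp₀A : p₀ ∈ A := by
    have : ξ₀ ∈ ({ξ' | (θ₀, ξ') ∈ A} : Set M) := by rw [hfib]; rfl
    exact this
  -- forward invariance
  have hfwd : ∀ (n : ℕ), ∀ p ∈ A, f^[n] p ∈ A := by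
    intro n
    induction n with
    | zero => intro p hp; simpa using hp
    | succ n ih =>
      intro p hp
      rw [Function.iterate_succ_apply', ← hinv]
      exact ⟨_, ih p hp, rfl⟩
  -- preimages within A
  have hpre : ∀ (n : ℕ), ∀ p ∈ A, ∃ q ∈ A, f^[n] q = p := by
    intro n
    induction n with
    | zero => intro p hp; exact ⟨p, hp, rfl⟩
    | succ n ih =>
      intro p hp
      rw [← hinv] at hp
      obtain ⟨p₁, hp₁, hfp⟩ := hp
      obtain ⟨q, hq, hfq⟩ := ih p₁ hp₁
      exact ⟨q, hq, by rw [Function.iterate_succ_apply', hfq, hfp]⟩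
  -- base coordinate of iterates
  have hbase : ∀ (n : ℕ) (p : AddCircle (1:ℝ) × M),
      (f^[n] p).1 = p.1 + n • ((ω : ℝ) : AddCircle (1:ℝ)) := by
    intro n
    induction n with
    | zero => intro p; simp
    | succ n ih =>
      intro p
      rw [Function.iterate_succ_apply', hf]
      show (f^[n] p).1 + ((ω : ℝ) : AddCircle (1:ℝ)) = _
      rw [ih p, succ_nsmul]
      abel
  -- measurability and invariance of iterates
  have hmf : Measurable f := hcont.measurable
  have hmiter : ∀ n : ℕ, Measurable (f^[n]) := fun n => hmf.iterate n
  have hiterinv : ∀ (n : ℕ) (s : Set (AddCircle (1:ℝ) × M)), MeasurableSet s →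
      μ ((f^[n]) ⁻¹' s) = μ s := by
    intro n
    induction n with
    | zero => intro s _; rfl
    | succ n ih =>
      intro s hs
      rw [Function.iterate_succ, Set.preimage_comp, hμinv _ ((hmiter n) hs), ih s hs]
  -- syndetic positive-measure returns
  have hsynd : ∀ B : Set (AddCircle (1:ℝ) × M), MeasurableSet B → 0 < μ B →
      ∃ L : ℕ, ∀ a : ℕ, ∃ n : ℕ, a < n ∧ n ≤ a + L ∧ 0 < μ (B ∩ (f^[n]) ⁻¹' B) := by
    intro B hBm hB0
    by_contra hcon
    push_neg at hcon
    choose gap hgap using hcon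
    set t : ℕ → ℕ := fun k => Nat.rec 0 (fun _ tk => gap (tk + 1) + (tk + 1)) k with htdef
    have htsucc : ∀ k, t (k + 1) = gap (t k + 1) + (t k + 1) := fun _ => rfl
    have hmono : StrictMono t := by
      apply strictMono_nat_of_lt_succ
      intro k
      rw [htsucc k]
      omega
    have hpair : ∀ i j : ℕ, i < j → μ (B ∩ (f^[t j - t i]) ⁻¹' B) = 0 := by
      intro i j hij
      obtain ⟨k, rfl⟩ : ∃ k, j = k + 1 := ⟨j - 1, by omega⟩
      have hik : i ≤ k := Nat.lt_succ_iff.mp hij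
      have hti : t i ≤ t k := hmono.monotone hik
      have h1 : gap (t k + 1) < t (k + 1) - t i := by rw [htsucc]; omega
      have h2 : t (k + 1) - t i ≤ gap (t k + 1) + (t k + 1) := by rw [htsucc]; omega
      have h3 := hgap (t k + 1) (t (k + 1) - t i) h1 h2
      simpa [not_lt, nonpos_iff_eq_zero] using h3
    have hSm : ∀ i : ℕ, MeasurableSet ((f^[t i]) ⁻¹' B) := fun i => (hmiter (t i)) hBm
    have hdisj : ∀ i j : ℕ, i < j → μ ((f^[t i]) ⁻¹' B ∩ (f^[t j]) ⁻¹' B) = 0 := by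
      intro i j hij
      have hle : t i ≤ t j := (hmono hij).le
      have hcomp : (f^[t j]) ⁻¹' B = (f^[t i]) ⁻¹' ((f^[t j - t i]) ⁻¹' B) := by
        rw [← Set.preimage_comp, ← Function.iterate_add f (t j - t i) (t i),
          Nat.sub_add_cancel hle]
      rw [hcomp, ← Set.preimage_inter,
        hiterinv (t i) _ (hBm.inter ((hmiter (t j - t i)) hBm))]
      exact hpair i j hij
    obtain ⟨K, hK⟩ := ENNReal.exists_nat_gt
      ((ENNReal.div_lt_top (measure_ne_top μ _) hB0.ne').ne)
    have hKB : μ Set.univ < K * μ B := by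
      rw [← ENNReal.div_lt_iff (Or.inl hB0.ne') (Or.inl (measure_ne_top μ B))]
      exact hK
    have hsum : μ (⋃ i ∈ Finset.range K, (f^[t i]) ⁻¹' B)
        = ∑ i ∈ Finset.range K, μ ((f^[t i]) ⁻¹' B) := by
      apply measure_biUnion_finset₀
      · intro i _ j _ hij
        rcases Nat.lt_or_ge i j with h | h
        · exact hdisj i j h
        · exact AEDisjoint.symm (hdisj j i (by omega))
      · exact fun i _ => (hSm i).nullMeasurableSet
    have hconst : ∀ i : ℕ, μ ((f^[t i]) ⁻¹' B) = μ B := fun i => hiterinv (t i) B hBm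
    have hfin : (K : ℝ≥0∞) * μ B ≤ μ Set.univ := by
      calc (K : ℝ≥0∞) * μ B = ∑ _x ∈ Finset.range K, μ B := by
            rw [Finset.sum_const, Finset.card_range, nsmul_eq_mul]
      _ = ∑ i ∈ Finset.range K, μ ((f^[t i]) ⁻¹' B) := by
            exact Finset.sum_congr rfl fun i _ => (hconst i).symm
      _ = μ (⋃ i ∈ Finset.range K, (f^[t i]) ⁻¹' B) := hsum.symm
      _ ≤ μ Set.univ := measure_mono (Set.subset_univ _)
    exact absurd hKB (not_lt.mpr hfin)
  -- stable ball at the transitive point x₀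
  have hstable : ∀ ε : ℝ, 0 < ε → ∃ δ : ℝ, 0 < δ ∧ δ ≤ ε / 4 ∧
      ∀ u ∈ A, ∀ v ∈ A, dist u x₀ < δ → dist v x₀ < δ →
        ∀ n : ℕ, dist (f^[n] u) (f^[n] v) ≤ ε / 2 := by
    intro ε hε
    obtain ⟨x₁, hx₁A, δ₁, hδ₁, hx₁⟩ := hsens (ε/4) (by linarith)
    have hx₁c : x₁ ∈ closure (Set.range fun n : ℕ => f^[n] x₀) := hx₀d hx₁A
    rw [Metric.mem_closure_iff] at hx₁c
    obtain ⟨y, ⟨m₁, rfl⟩, hyd⟩ := hx₁c (δ₁/2) (by linarith)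
    obtain ⟨ρ, hρ, hρp⟩ := multi_cont hcont x₀ m₁ (r := min (δ₁/2) (ε/8)) (by positivity)
    refine ⟨min ρ (ε/8), by positivity, ?_, ?_⟩
    · calc min ρ (ε/8) ≤ ε/8 := min_le_right _ _
      _ ≤ ε/4 := by linarith
    intro u hu v hv hud hvd n
    have hu' : dist u x₀ < ρ := lt_of_lt_of_le hud (min_le_left _ _)
    have hv' : dist v x₀ < ρ := lt_of_lt_of_le hvd (min_le_left _ _)
    have hmin8 : min (δ₁/2) (ε/8) ≤ ε/8 := min_le_right _ _
    have hmin1 : min (δ₁/2) (ε/8) ≤ δ₁/2 := min_le_left _ _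
    rcases le_or_gt n m₁ with h | h
    · have h1 := hρp u hu' n h
      have h2 := hρp v hv' n h
      calc dist (f^[n] u) (f^[n] v)
          ≤ dist (f^[n] u) (f^[n] x₀) + dist (f^[n] x₀) (f^[n] v) := dist_triangle _ _ _
      _ = dist (f^[n] u) (f^[n] x₀) + dist (f^[n] v) (f^[n] x₀) := by
            rw [dist_comm (f^[n] x₀) (f^[n] v)]
      _ ≤ ε/8 + ε/8 := add_le_add (le_of_lt (lt_of_lt_of_le h1 hmin8))
            (le_of_lt (lt_of_lt_of_le h2 hmin8))
      _ ≤ ε/2 := by linarith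
    · have hyu : dist x₁ (f^[m₁] u) ≤ δ₁ := by
        have h1 := hρp u hu' m₁ le_rfl
        calc dist x₁ (f^[m₁] u)
            ≤ dist x₁ (f^[m₁] x₀) + dist (f^[m₁] x₀) (f^[m₁] u) := dist_triangle _ _ _
        _ ≤ δ₁/2 + δ₁/2 := add_le_add hyd.le (by rw [dist_comm]; linarith [hmin1, h1])
        _ = δ₁ := by ring
      have hyv : dist x₁ (f^[m₁] v) ≤ δ₁ := by
        have h2 := hρp v hv' m₁ le_rfl
        calc dist x₁ (f^[m₁] v)
            ≤ dist x₁ (f^[m₁] x₀) + dist (f^[m₁] x₀) (f^[m₁] v) := dist_triangle _ _ _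
        _ ≤ δ₁/2 + δ₁/2 := add_le_add hyd.le (by rw [dist_comm]; linarith [hmin1, h2])
        _ = δ₁ := by ring
      have hres := hx₁ (f^[m₁] u) (hfwd m₁ u hu) (f^[m₁] v) (hfwd m₁ v hv) hyu hyv (n - m₁)
      rw [← Function.iterate_add_apply, ← Function.iterate_add_apply,
        Nat.sub_add_cancel h.le] at hres
      linarith
  -- returns of x₀ close to itself in every window
  have hreturns : ∀ ε : ℝ, 0 < ε → ∃ L : ℕ, ∀ a : ℕ,
      ∃ n, a < n ∧ n ≤ a + L ∧ dist (f^[n] x₀) x₀ < ε := by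
    intro ε hε
    obtain ⟨δ₂, hδ₂, hδ₂ε, hP⟩ := hstable ε hε
    have hB0 : 0 < μ (Metric.ball x₀ δ₂) :=
      hμfull _ Metric.isOpen_ball ⟨x₀, Metric.mem_ball_self hδ₂, hx₀A⟩
    obtain ⟨L, hL⟩ := hsynd (Metric.ball x₀ δ₂) measurableSet_ball hB0
    refine ⟨L, fun a => ?_⟩
    obtain ⟨n, hn1, hn2, hn3⟩ := hL a
    have hzA : (Metric.ball x₀ δ₂ ∩ (f^[n]) ⁻¹' (Metric.ball x₀ δ₂) ∩ A).Nonempty := by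
      by_contra hemp
      rw [Set.not_nonempty_iff_eq_empty] at hemp
      have hsub : Metric.ball x₀ δ₂ ∩ (f^[n]) ⁻¹' (Metric.ball x₀ δ₂) ⊆ Aᶜ := by
        intro q hq hqA
        have : q ∈ (∅ : Set (AddCircle (1:ℝ) × M)) := hemp ▸ Set.mem_inter hq hqA
        exact this
      have hle : μ (Metric.ball x₀ δ₂ ∩ (f^[n]) ⁻¹' (Metric.ball x₀ δ₂)) ≤ μ Aᶜ :=
        measure_mono hsub
      rw [hμA] at hle
      exact absurd (le_antisymm hle (zero_le)) hn3.ne'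
    obtain ⟨z, ⟨hzB, hzfB⟩, hzA⟩ := hzA
    refine ⟨n, hn1, hn2, ?_⟩
    have h1 : dist (f^[n] x₀) (f^[n] z) ≤ ε/2 :=
      hP x₀ hx₀A z hzA (by simpa using hδ₂) (Metric.mem_ball.mp hzB) n
    have h2 : dist (f^[n] z) x₀ < δ₂ := Metric.mem_ball.mp hzfB
    calc dist (f^[n] x₀) x₀ ≤ dist (f^[n] x₀) (f^[n] z) + dist (f^[n] z) x₀ :=
          dist_triangle _ _ _
    _ < ε/2 + δ₂ := add_lt_add_of_le_of_lt h1 h2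
    _ ≤ ε := by linarith
  -- the orbit of the pinched point approaches x₀
  have hreach : ∀ δ : ℝ, 0 < δ → ∃ l : ℕ, dist (f^[l] p₀) x₀ < δ := by
    intro δ hδ
    obtain ⟨L, hL⟩ := hreturns (δ/2) (by linarith)
    obtain ⟨ρ, hρ, hρp⟩ := multi_cont hcont p₀ L (r := δ/2) (by linarith)
    have hp₀c : p₀ ∈ closure (Set.range fun n : ℕ => f^[n] x₀) := hx₀d hp₀A
    rw [Metric.mem_closure_iff] at hp₀c
    obtain ⟨y, ⟨m, rfl⟩, hyd⟩ := hp₀c ρ hρ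
    obtain ⟨n, hn1, hn2, hn3⟩ := hL m
    refine ⟨n - m, ?_⟩
    have hu : dist (f^[m] x₀) p₀ < ρ := by rw [dist_comm]; exact hyd
    have h1 := hρp (f^[m] x₀) hu (n - m) (by omega)
    rw [← Function.iterate_add_apply, Nat.sub_add_cancel hn1.le] at h1
    calc dist (f^[n - m] p₀) x₀
        ≤ dist (f^[n - m] p₀) (f^[n] x₀) + dist (f^[n] x₀) x₀ := dist_triangle _ _ _
    _ < δ/2 + δ/2 := add_lt_add (by rw [dist_comm]; exact h1) hn3
    _ = δ := by ring
  -- the pinched point is a stability point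
  have hp₀stable : ∀ ε : ℝ, 0 < ε → ∃ ρ : ℝ, 0 < ρ ∧
      ∀ u ∈ A, ∀ v ∈ A, dist u p₀ < ρ → dist v p₀ < ρ →
        ∀ n : ℕ, dist (f^[n] u) (f^[n] v) ≤ ε := by
    intro ε hε
    obtain ⟨δ, hδ, hδε, hP⟩ := hstable ε hε
    obtain ⟨l, hl⟩ := hreach (δ/2) (by linarith)
    obtain ⟨ρ, hρ, hρp⟩ := multi_cont hcont p₀ l (r := min (ε/2) (δ/2)) (by positivity)
    refine ⟨ρ, hρ, ?_⟩
    intro u hu v hv hud hvd n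
    have hminε : min (ε/2) (δ/2) ≤ ε/2 := min_le_left _ _
    have hminδ : min (ε/2) (δ/2) ≤ δ/2 := min_le_right _ _
    rcases le_or_gt n l with h | h
    · have h1 := hρp u hud n h
      have h2 := hρp v hvd n h
      calc dist (f^[n] u) (f^[n] v)
          ≤ dist (f^[n] u) (f^[n] p₀) + dist (f^[n] p₀) (f^[n] v) := dist_triangle _ _ _
      _ = dist (f^[n] u) (f^[n] p₀) + dist (f^[n] v) (f^[n] p₀) := by
            rw [dist_comm (f^[n] p₀) (f^[n] v)]
      _ ≤ ε/2 + ε/2 := add_le_add (le_of_lt (lt_of_lt_of_le h1 hminε))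
            (le_of_lt (lt_of_lt_of_le h2 hminε))
      _ = ε := by ring
    · have hu' : dist (f^[l] u) x₀ < δ := by
        have h1 := hρp u hud l le_rfl
        calc dist (f^[l] u) x₀ ≤ dist (f^[l] u) (f^[l] p₀) + dist (f^[l] p₀) x₀ :=
              dist_triangle _ _ _
        _ < δ/2 + δ/2 := add_lt_add (lt_of_lt_of_le h1 hminδ) hl
        _ = δ := by ring
      have hv' : dist (f^[l] v) x₀ < δ := by
        have h2 := hρp v hvd l le_rfl
        calc dist (f^[l] v) x₀ ≤ dist (f^[l] v) (f^[l] p₀) + dist (f^[l] p₀) x₀ :=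
              dist_triangle _ _ _
        _ < δ/2 + δ/2 := add_lt_add (lt_of_lt_of_le h2 hminδ) hl
        _ = δ := by ring
      have hres := hP (f^[l] u) (hfwd l u hu) (f^[l] v) (hfwd l v hv) hu' hv' (n - l)
      rw [← Function.iterate_add_apply, ← Function.iterate_add_apply,
        Nat.sub_add_cancel h.le] at hres
      linarith
  -- small slabs over a neighbourhood of θ₀
  have hslab : ∀ r : ℝ, 0 < r → ∃ w : ℝ, 0 < w ∧
      ∀ p ∈ A, dist p.1 θ₀ < w → dist p p₀ < r := by
    intro r hr
    have hKc : IsCompact (A ∩ (Metric.ball p₀ r)ᶜ) :=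
      hA.inter_right (Metric.isOpen_ball.isClosed_compl)
    have hKp : IsCompact (Prod.fst '' (A ∩ (Metric.ball p₀ r)ᶜ)) :=
      hKc.image continuous_fst
    have hθ₀ : θ₀ ∉ Prod.fst '' (A ∩ (Metric.ball p₀ r)ᶜ) := by
      rintro ⟨p, ⟨hpA, hpB⟩, hp1⟩
      have hmemA : (θ₀, p.2) ∈ A := by
        rw [← hp1, Prod.mk.eta]
        exact hpA
      have hp2 : p.2 = ξ₀ := by
        have hm : p.2 ∈ ({ξ' | (θ₀, ξ') ∈ A} : Set M) := hmemA
        rw [hfib] at hm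
        exact hm
      apply hpB
      have hpp : p = p₀ := Prod.ext hp1 hp2
      rw [hpp]
      exact Metric.mem_ball_self hr
    obtain ⟨w, hw, hwb⟩ := Metric.isOpen_iff.mp hKp.isClosed.isOpen_compl θ₀ hθ₀
    refine ⟨w, hw, ?_⟩
    intro p hpA hpd
    by_contra hfar
    have hpK : p ∈ A ∩ (Metric.ball p₀ r)ᶜ := ⟨hpA, by simpa [Metric.mem_ball] using hfar⟩
    exact (hwb (Metric.mem_ball.mpr hpd)) ⟨p, hpK, rfl⟩
  -- all fibres are singletons
  have hfib_eq : ∀ (θ : AddCircle (1:ℝ)) (a b : M), (θ, a) ∈ A → (θ, b) ∈ A → a = b := by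
    intro θ a b ha hb
    have hle : ∀ ε : ℝ, 0 < ε → dist a b ≤ ε := by
      intro ε hε
      obtain ⟨ρ, hρ, hP⟩ := hp₀stable ε hε
      obtain ⟨w, hw, hW⟩ := hslab ρ hρ
      obtain ⟨n, hn⟩ := circle_dense hω.neg θ θ₀ hw
      obtain ⟨qa, hqaA, hqa⟩ := hpre n (θ, a) ha
      obtain ⟨qb, hqbA, hqb⟩ := hpre n (θ, b) hb
      have hqa1 : qa.1 = θ + n • ((-ω : ℝ) : AddCircle (1:ℝ)) := by
        have h2 : θ = qa.1 + n • ((ω : ℝ) : AddCircle (1:ℝ)) := by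
          rw [← hbase n qa, hqa]
        rw [h2, AddCircle.coe_neg, smul_neg]
        abel
      have hqb1 : qb.1 = θ + n • ((-ω : ℝ) : AddCircle (1:ℝ)) := by
        have h2 : θ = qb.1 + n • ((ω : ℝ) : AddCircle (1:ℝ)) := by
          rw [← hbase n qb, hqb]
        rw [h2, AddCircle.coe_neg, smul_neg]
        abel
      have h1 : dist qa p₀ < ρ := hW qa hqaA (by rw [hqa1]; exact hn)
      have h2 : dist qb p₀ < ρ := hW qb hqbA (by rw [hqb1]; exact hn)
      have h3 := hP qa hqaA qb hqbA h1 h2 n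
      rw [hqa, hqb] at h3
      have h4 : dist a b ≤ dist (θ, a) (θ, b) := by
        rw [Prod.dist_eq]
        exact le_max_right _ _
      linarith
    by_contra hne
    have hd : 0 < dist a b := dist_pos.mpr hne
    linarith [hle (dist a b / 2) (by linarith)]
  -- all fibres are nonempty
  have hfib_ne : ∀ θ : AddCircle (1:ℝ), ∃ a : M, (θ, a) ∈ A := by
    intro θ
    have hcl : IsClosed (Prod.fst '' A) := (hA.image continuous_fst).isClosed
    have hmem : θ ∈ Prod.fst '' A := by
      rw [← hcl.closure_eq, Metric.mem_closure_iff]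
      intro ε hε
      obtain ⟨n, hn⟩ := circle_dense hω θ₀ θ hε
      refine ⟨(f^[n] p₀).1, ⟨f^[n] p₀, hfwd n p₀ hp₀A, rfl⟩, ?_⟩
      rw [dist_comm, hbase n p₀]
      exact hn
    obtain ⟨p, hpA, hp1⟩ := hmem
    refine ⟨p.2, ?_⟩
    rw [← hp1, Prod.mk.eta]
    exact hpA
  choose ψ hψ using hfib_ne
  have hgraph : A = {p : AddCircle (1:ℝ) × M | p.2 = ψ p.1} := by
    ext p
    constructor
    · intro hp
      exact hfib_eq p.1 p.2 (ψ p.1) (by rw [Prod.mk.eta]; exact hp) (hψ p.1)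
    · intro hp
      have hpp : p = (p.1, ψ p.1) := Prod.ext rfl hp
      rw [hpp]
      exact hψ p.1
  refine ⟨ψ, ?_, hgraph⟩
  rw [continuous_iff_isClosed]
  intro C hC
  have hset : ψ ⁻¹' C = Prod.fst '' (A ∩ (Set.univ ×ˢ C)) := by
    ext θ
    constructor
    · intro hθ
      exact ⟨(θ, ψ θ), ⟨hψ θ, ⟨Set.mem_univ _, hθ⟩⟩, rfl⟩
    · rintro ⟨p, ⟨hpA, -, hpC⟩, rfl⟩
      have hps : p.2 = ψ p.1 := hfib_eq p.1 p.2 (ψ p.1) (by rw [Prod.mk.eta]; exact hpA) (hψ p.1)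
      show ψ p.1 ∈ C
      rw [← hps]
      exact hpC
  rw [hset]
  exact ((hA.inter_right (isClosed_univ.prod hC)).image continuous_fst).isClosed
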